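/- arXiv:0911.4537 — 2 statements merged into one kernel-verified Lean document; each statement's English description precedes it below -/
import Mathlib

section
/- Let G be a finite abelian group and let Z/2Z act on G by inversion. The number of conjugacy classes of the semidirect product G ⋊ Z/2Z equals |G[2]| + (|G| - |G[2]|)/2 + |G/2G|, where G[2] is the 2-torsion subgroup of G. -/
/-- The action of `ZMod 2` (written multiplicatively) on a commutative group `G`
in which the nontrivial element acts by inversion. -/
noncomputable def invAction (G : Type*) [CommGroup G] :
    Multiplicative (ZMod 2) →* MulAut G where
  toFun a := if Multiplicative.toAdd a = 0 then 1 else MulEquiv.inv G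
  map_one' := by simp
  map_mul' a b := by
    have h : ∀ x : ZMod 2, x = 0 ∨ x = 1 := by decide
    have hab : Multiplicative.toAdd (a * b) = Multiplicative.toAdd a + Multiplicative.toAdd b :=
      rfl
    ext g
    rcases h (Multiplicative.toAdd a) with ha | ha <;>
      rcases h (Multiplicative.toAdd b) with hb | hb <;>
        simp [hab, ha, hb, (by decide : (1 : ZMod 2) + 1 = 0),
          (by decide : (1 : ZMod 2) ≠ 0)]


namespace CardConjAux

variable (G : Type*) [CommGroup G]

lemma invAction_apply (a : Multiplicative (ZMod 2)) (g : G) :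
    invAction G a g = if Multiplicative.toAdd a = 0 then g else g⁻¹ := by
  show (if Multiplicative.toAdd a = 0 then (1 : MulAut G) else MulEquiv.inv G) g = _
  split <;> rfl

lemma invAction_inv_apply (a : Multiplicative (ZMod 2)) (g : G) :
    (invAction G a)⁻¹ g = if Multiplicative.toAdd a = 0 then g else g⁻¹ := by
  show ((if Multiplicative.toAdd a = 0 then (1 : MulAut G) else MulEquiv.inv G))⁻¹ g = _
  split <;> rfl

lemma invAction_symm_apply (a : Multiplicative (ZMod 2)) (g : G) :
    (invAction G a).symm g = if Multiplicative.toAdd a = 0 then g else g⁻¹ :=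
  invAction_inv_apply G a g

abbrev K := G ⋊[invAction G] Multiplicative (ZMod 2)

def s1 : Setoid G where
  r g g' := g' = g ∨ g' = g⁻¹
  iseqv := by
    refine ⟨fun g => Or.inl rfl, ?_, ?_⟩
    · rintro a b (rfl | rfl) <;> simp
    · rintro a b c (rfl | rfl) (rfl | rfl) <;> simp

abbrev Q2 := G ⧸ (powMonoidHom 2 : G →* G).range

def φ : K G → Quotient (s1 G) ⊕ Q2 G := fun x =>
  if Multiplicative.toAdd x.right = 0 then Sum.inl (Quotient.mk (s1 G) x.left)
  else Sum.inr (QuotientGroup.mk x.left)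

lemma mk_sq_mul (h g : G) : (QuotientGroup.mk (h ^ 2 * g) : Q2 G) = QuotientGroup.mk g := by
  apply QuotientGroup.eq.mpr
  refine ⟨h⁻¹, ?_⟩
  simp [powMonoidHom_apply, mul_inv_rev, inv_pow, mul_comm, mul_left_comm]

lemma mk_inv (g : G) : (QuotientGroup.mk g⁻¹ : Q2 G) = QuotientGroup.mk g := by
  apply QuotientGroup.eq.mpr
  exact ⟨g, by simp [powMonoidHom_apply, pow_two]⟩

lemma phi_conj (c x : K G) : φ G (c * x * c⁻¹) = φ G x := by
  have h2 : ∀ a : ZMod 2, a = 0 ∨ a = 1 := by decide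
  have hr : (c * x * c⁻¹).right = x.right := by
    simp [mul_right_comm]
  have hl : (c * x * c⁻¹).left =
      c.left * invAction G c.right x.left *
        invAction G (c.right * x.right) (invAction G c.right⁻¹ c.left⁻¹) := by
    simp
  rcases h2 (Multiplicative.toAdd x.right) with hx | hx <;>
    rcases h2 (Multiplicative.toAdd c.right) with hc | hc <;>
      simp only [φ, hr, hx, hc, if_pos, if_neg, hl]
  · simp [invAction_apply, invAction_inv_apply, invAction_symm_apply, hx, hc, mul_right_comm]
  · have h1 : c.left * ((invAction G) c.right) x.left *
        ((invAction G) (c.right * x.right)) (((invAction G) c.right⁻¹) c.left⁻¹) = x.left⁻¹ := by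
      simp [invAction_apply, invAction_inv_apply, invAction_symm_apply, hx, hc, toAdd_mul, toAdd_inv,
        (by decide : (-1 : ZMod 2) = 1), (by decide : (1 : ZMod 2) ≠ 0), mul_right_comm]
    rw [h1]
    exact congrArg _ (Quotient.sound (Or.inr (inv_inv _).symm))
  · have h1 : c.left * ((invAction G) c.right) x.left *
        ((invAction G) (c.right * x.right)) (((invAction G) c.right⁻¹) c.left⁻¹) =
        c.left ^ 2 * x.left := by
      simp [invAction_apply, invAction_inv_apply, hx, hc, toAdd_mul, toAdd_inv,
        (by decide : (1 : ZMod 2) ≠ 0), pow_two, mul_right_comm]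
    rw [if_neg (by decide : ¬ (1 : ZMod 2) = 0), if_neg (by decide : ¬ (1 : ZMod 2) = 0), h1]
    exact congrArg _ (mk_sq_mul G c.left x.left)
  · have h1 : c.left * ((invAction G) c.right) x.left *
        ((invAction G) (c.right * x.right)) (((invAction G) c.right⁻¹) c.left⁻¹) =
        c.left ^ 2 * x.left⁻¹ := by
      simp [invAction_apply, invAction_inv_apply, hx, hc, toAdd_mul, toAdd_inv,
        (by decide : (-1 : ZMod 2) = 1), (by decide : (1 : ZMod 2) + 1 = 0),
        (by decide : (1 : ZMod 2) ≠ 0), pow_two, mul_right_comm]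
    rw [if_neg (by decide : ¬ (1 : ZMod 2) = 0), if_neg (by decide : ¬ (1 : ZMod 2) = 0), h1]
    exact congrArg _ ((mk_sq_mul G c.left x.left⁻¹).trans (mk_inv G x.left))

noncomputable def F : ConjClasses (K G) → Quotient (s1 G) ⊕ Q2 G :=
  Quotient.lift (φ G) (by
    intro a b h
    obtain ⟨c, hc⟩ := isConj_iff.mp h
    rw [← hc, phi_conj])

lemma right_eq {a b : K G} (h : Multiplicative.toAdd a.right = Multiplicative.toAdd b.right) :
    a.right = b.right := Multiplicative.toAdd.injective h

lemma F_injective : Function.Injective (F G) := by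
  have h2 : ∀ a : ZMod 2, a = 0 ∨ a = 1 := by decide
  intro q1 q2
  refine Quotient.inductionOn₂ q1 q2 ?_
  intro a b h
  apply Quotient.sound
  show IsConj a b
  simp only [φ, F, Quotient.lift_mk] at h
  rcases h2 (Multiplicative.toAdd a.right) with ha | ha <;>
    rcases h2 (Multiplicative.toAdd b.right) with hb | hb <;>
      simp only [ha, hb, if_pos, if_neg, (by decide : ¬ (1 : ZMod 2) = 0),
        reduceIte] at h
  · -- both right components trivial
    have hr : a.right = b.right := right_eq G (ha.trans hb.symm)
    rcases Quotient.exact (Sum.inl.inj h) with h1 | h1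
    · rw [SemidirectProduct.ext h1.symm hr]
    · -- b.left = a.left⁻¹, conjugate by (1, ofAdd 1)
      refine isConj_iff.mpr ⟨⟨1, Multiplicative.ofAdd 1⟩, SemidirectProduct.ext ?_ ?_⟩
      · simp [invAction_apply, invAction_inv_apply, ha, h1,
          (by decide : (1 : ZMod 2) ≠ 0)]
      · simp [← hr, mul_right_comm]
  · exact absurd h (by simp)
  · exact absurd h (by simp)
  · -- both right components nontrivial
    have hr : a.right = b.right := right_eq G (ha.trans hb.symm)
    obtain ⟨t, ht⟩ := QuotientGroup.eq.mp (Sum.inr.inj h)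
    have hb1 : b.left = t ^ 2 * a.left := by
      have : t ^ 2 = a.left⁻¹ * b.left := ht
      rw [this, mul_comm (a.left⁻¹ * b.left) a.left, ← mul_assoc, mul_inv_cancel, one_mul]
    refine isConj_iff.mpr ⟨⟨t, 1⟩, SemidirectProduct.ext ?_ ?_⟩
    · simp [invAction_apply, invAction_inv_apply, ha, hb1, pow_two, mul_right_comm,
        mul_comm, mul_left_comm]
    · simp [← hr, mul_right_comm]

lemma F_surjective : Function.Surjective (F G) := by
  rintro (q | q)
  · obtain ⟨g, rfl⟩ := Quotient.exists_rep q
    exact ⟨ConjClasses.mk ⟨g, 1⟩, by simp [F, ConjClasses.mk, φ]⟩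
  · obtain ⟨g, rfl⟩ := Quotient.exists_rep q
    refine ⟨ConjClasses.mk ⟨g, Multiplicative.ofAdd 1⟩, ?_⟩
    simp [F, ConjClasses.mk, φ, (by decide : ¬ (1 : ZMod 2) = 0)]

lemma card_eq_sum [Finite G] :
    Nat.card (ConjClasses (K G)) = Nat.card (Quotient (s1 G)) + Nat.card (Q2 G) := by
  rw [Nat.card_eq_of_bijective (F G) ⟨F_injective G, F_surjective G⟩, Nat.card_sum]

lemma card_q1 [Finite G] :
    Nat.card (Quotient (s1 G)) = Nat.card ((powMonoidHom 2 : G →* G).ker) +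
      (Nat.card G - Nat.card ((powMonoidHom 2 : G →* G).ker)) / 2 := by
  classical
  cases nonempty_fintype G
  have hker : Nat.card ((powMonoidHom 2 : G →* G).ker)
      = (Finset.univ.filter (fun g : G => g ^ 2 = 1)).card := by
    rw [Nat.card_congr (Equiv.subtypeEquivRight (q := fun g : G => g ^ 2 = 1)
      (fun g => by simp [MonoidHom.mem_ker, powMonoidHom_apply]))]
    rw [Nat.card_eq_fintype_card, Fintype.card_subtype]
  have hfib : ∀ q : Quotient (s1 G),
      (Finset.univ.filter (fun g : G => Quotient.mk (s1 G) g = q)).card +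
      ((Finset.univ.filter (fun g : G => g ^ 2 = 1)).filter
        (fun g : G => Quotient.mk (s1 G) g = q)).card = 2 := by
    intro q
    obtain ⟨g, rfl⟩ := Quotient.exists_rep q
    have hmem : ∀ x : G, Quotient.mk (s1 G) x = Quotient.mk (s1 G) g ↔ (x = g ∨ x = g⁻¹) := by
      intro x
      rw [Quotient.eq]
      show (g = x ∨ g = x⁻¹) ↔ _
      constructor
      · rintro (rfl | rfl) <;> simp
      · rintro (rfl | rfl) <;> simp
    by_cases hg : g ^ 2 = 1
    · have hginv : g⁻¹ = g := by
        rw [pow_two] at hg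
        exact inv_eq_of_mul_eq_one_left hg
      have h1 : Finset.univ.filter (fun x : G => Quotient.mk (s1 G) x = Quotient.mk (s1 G) g)
          = {g} := by
        ext x; simp [hmem, hginv]
      have h2 : ((Finset.univ.filter (fun g : G => g ^ 2 = 1)).filter
          (fun x : G => Quotient.mk (s1 G) x = Quotient.mk (s1 G) g)) = {g} := by
        ext x
        simp only [Finset.mem_filter, Finset.mem_univ, true_and, hmem, hginv, or_self,
          Finset.mem_singleton]
        constructor
        · rintro ⟨_, h⟩; exact h
        · rintro rfl; exact ⟨hg, rfl⟩
      rw [h1, h2]; simp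
    · have hginv : g ≠ g⁻¹ := fun hE =>
        hg (by rw [pow_two, ← inv_eq_iff_mul_eq_one]; exact hE.symm)
      have h1 : Finset.univ.filter (fun x : G => Quotient.mk (s1 G) x = Quotient.mk (s1 G) g)
          = {g, g⁻¹} := by
        ext x; simp [hmem]
      have h2 : ((Finset.univ.filter (fun g : G => g ^ 2 = 1)).filter
          (fun x : G => Quotient.mk (s1 G) x = Quotient.mk (s1 G) g)) = ∅ := by
        ext x
        simp only [Finset.mem_filter, Finset.mem_univ, true_and, hmem, Finset.notMem_empty,
          iff_false, not_and]
        rintro hx (rfl | rfl)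
        · exact hg hx
        · exact hg (by rwa [inv_pow, inv_eq_one] at hx)
      rw [h1, h2, Finset.card_pair hginv]
      simp
  have hG : Fintype.card G
      = ∑ q : Quotient (s1 G),
          (Finset.univ.filter (fun g : G => Quotient.mk (s1 G) g = q)).card := by
    rw [← Finset.card_univ]
    exact Finset.card_eq_sum_card_fiberwise (fun x _ => Finset.mem_univ _)
  have hS : (Finset.univ.filter (fun g : G => g ^ 2 = 1)).card
      = ∑ q : Quotient (s1 G),
          ((Finset.univ.filter (fun g : G => g ^ 2 = 1)).filter
            (fun g : G => Quotient.mk (s1 G) g = q)).card :=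
    Finset.card_eq_sum_card_fiberwise (fun x _ => Finset.mem_univ _)
  have key : 2 * Nat.card (Quotient (s1 G))
      = Nat.card G + Nat.card ((powMonoidHom 2 : G →* G).ker) := by
    rw [Nat.card_eq_fintype_card, Nat.card_eq_fintype_card, hker, hG, hS,
      ← Finset.sum_add_distrib, Finset.sum_congr rfl (fun q _ => hfib q)]
    simp [Finset.sum_const, Finset.card_univ, mul_comm]
  have hle : Nat.card ((powMonoidHom 2 : G →* G).ker) ≤ Nat.card G :=
    Nat.card_le_card_of_injective _ Subtype.coe_injective
  omega

end CardConjAux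


/-- The number of conjugacy classes of `G ⋊ ℤ/2ℤ` (with `ℤ/2ℤ` acting by inversion) is
`|G[2]| + (|G| - |G[2]|)/2 + |G/2G|`, where `G[2]` is the 2-torsion subgroup of `G`
(multiplicatively, the kernel of squaring) and `2G` is the subgroup of squares. -/
theorem card_conjClasses_semidirect (G : Type*) [CommGroup G] [Finite G] :
    Nat.card (ConjClasses (G ⋊[invAction G] Multiplicative (ZMod 2))) =
      Nat.card ((powMonoidHom 2 : G →* G).ker) +
        (Nat.card G - Nat.card ((powMonoidHom 2 : G →* G).ker)) / 2 +
        Nat.card (G ⧸ (powMonoidHom 2 : G →* G).range) := by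
  rw [CardConjAux.card_eq_sum G, CardConjAux.card_q1 G]
end

section
/- Let p be a prime with p ≡ 3 (mod 4). Then the elliptic curve E : y² = x³ + x over F_p has exactly p + 1 points over F_p (including the point at infinity); equivalently its trace of Frobenius is 0. -/
open Finset WeierstrassCurve

section aux

variable (p : ℕ) [Fact p.Prime]

omit [Fact p.Prime] in
private lemma aux_p_odd (hp : p % 4 = 3) : p % 2 = 1 := Nat.odd_of_mod_four_eq_three hp

private lemma aux_char_ne_two (hp : p % 4 = 3) : ringChar (ZMod p) ≠ 2 := by
  rw [ZMod.ringChar_zmod_n]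
  intro h
  rw [h] at hp
  norm_num at hp

private lemma aux_chi_neg_one (hp : p % 4 = 3) : quadraticChar (ZMod p) (-1) = -1 := by
  rw [quadraticChar_neg_one (aux_char_ne_two p hp), ZMod.card, ZMod.χ₄_nat_eq_if_mod_four]
  simp [hp, Nat.odd_of_mod_four_eq_three hp]

private lemma aux_sum_zero (hp : p % 4 = 3) :
    ∑ x : ZMod p, quadraticChar (ZMod p) (x ^ 3 + x) = 0 := by
  set χ := quadraticChar (ZMod p)
  have h1 : ∑ x : ZMod p, χ ((-x) ^ 3 + (-x)) = ∑ x : ZMod p, χ (x ^ 3 + x) :=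
    Fintype.sum_equiv (Equiv.neg (ZMod p)) _ _ (fun x => rfl)
  have h2 : ∀ x : ZMod p, χ ((-x) ^ 3 + (-x)) = - χ (x ^ 3 + x) := by
    intro x
    have : (-x) ^ 3 + (-x) = (-1) * (x ^ 3 + x) := by ring
    rw [this, map_mul, aux_chi_neg_one p hp, neg_one_mul]
  rw [Finset.sum_congr rfl (fun x _ => h2 x), Finset.sum_neg_distrib] at h1
  linarith [h1]

private lemma aux_card_sols (hp : p % 4 = 3) :
    Fintype.card {P : ZMod p × ZMod p // P.2 ^ 2 = P.1 ^ 3 + P.1} = p := by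
  have e : {P : ZMod p × ZMod p // P.2 ^ 2 = P.1 ^ 3 + P.1} ≃
      Σ x : ZMod p, {y : ZMod p // y ^ 2 = x ^ 3 + x} :=
    { toFun := fun P => ⟨P.1.1, P.1.2, P.2⟩
      invFun := fun P => ⟨(P.1, P.2.1), P.2.2⟩
      left_inv := fun P => rfl
      right_inv := fun P => rfl }
  have hz : (Fintype.card {P : ZMod p × ZMod p // P.2 ^ 2 = P.1 ^ 3 + P.1} : ℤ) = p := by
    rw [Fintype.card_congr e, Fintype.card_sigma]
    push_cast
    have hy : ∀ x : ZMod p, (Fintype.card {y : ZMod p // y ^ 2 = x ^ 3 + x} : ℤ) =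
        quadraticChar (ZMod p) (x ^ 3 + x) + 1 := by
      intro x
      have := quadraticChar_card_sqrts (aux_char_ne_two p hp) (x ^ 3 + x)
      rw [← this, Set.toFinset_card]
      rfl
    rw [Finset.sum_congr rfl (fun x _ => hy x), Finset.sum_add_distrib,
      aux_sum_zero p hp]
    simp [ZMod.card]
  exact_mod_cast hz

end aux

/-- For a prime `p ≡ 3 (mod 4)`, the elliptic curve `y² = x³ + x` over `𝔽_p`
has exactly `p + 1` points (including the point at infinity). -/
theorem card_points_j1728 (p : ℕ) [Fact p.Prime] (hp : p % 4 = 3) :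
    let W : WeierstrassCurve (ZMod p) := ⟨0, 0, 0, 1, 0⟩
    Nat.card W.toAffine.Point = p + 1 := by
  intro W
  have hΔ : W.Δ ≠ 0 := by
    have h2 : (2 : ZMod p) ≠ 0 := by
      have := aux_char_ne_two p hp
      rw [show (2 : ZMod p) = ((2 : ℕ) : ZMod p) by norm_num, Ne,
        ZMod.natCast_eq_zero_iff]
      intro h
      have := (Nat.prime_dvd_prime_iff_eq (Fact.out) Nat.prime_two).mp h
      rw [this] at hp
      norm_num at hp
    have : W.Δ = -64 := by
      show W.toAffine.Δ = -64
      simp [WeierstrassCurve.Δ, WeierstrassCurve.b₂, WeierstrassCurve.b₄,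
        WeierstrassCurve.b₆, WeierstrassCurve.b₈, W]
      ring
    rw [this]
    intro h
    apply h2
    have h64 : (64 : ZMod p) = 0 := by linear_combination -h
    have : (2 : ZMod p) ^ 6 = 0 := by rw [show ((2:ZMod p))^6 = 64 by norm_num, h64]
    exact pow_eq_zero_iff (by norm_num) |>.mp this
  have heq : ∀ x y : ZMod p, W.toAffine.Equation x y ↔ y ^ 2 = x ^ 3 + x := by
    intro x y
    rw [WeierstrassCurve.Affine.equation_iff]
    show y ^ 2 + 0 * x * y + 0 * y = x ^ 3 + 0 * x ^ 2 + 1 * x + 0 ↔ _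
    constructor <;> intro h <;> linear_combination h
  have e : W.toAffine.Point ≃ Option {P : ZMod p × ZMod p // P.2 ^ 2 = P.1 ^ 3 + P.1} :=
    { toFun := fun P => match P with
        | .zero => none
        | @WeierstrassCurve.Affine.Point.some _ _ _ x y h => some ⟨(x, y), (heq x y).mp h.1⟩
      invFun := fun P => match P with
        | none => .zero
        | some ⟨(x, y), h⟩ => .some x y ((WeierstrassCurve.Affine.equation_iff_nonsingular_of_Δ_ne_zero (W := W.toAffine) hΔ).mp ((heq x y).mpr h))
      left_inv := fun P => by cases P <;> rfl
      right_inv := fun P => by rcases P with _ | ⟨⟨x, y⟩, h⟩ <;> rfl }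
  rw [Nat.card_congr e, Nat.card_eq_fintype_card, Fintype.card_option, aux_card_sols p hp]
end
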